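/- d̃ᵀR̃⁻¹d̃ = dᵀR⁻¹d + b₁(b₂ - 1)² where b₁ = 1/(1 - mᵀR⁻¹m) and b₂ = mᵀR⁻¹d. -/

import Mathlib

open Matrix

lemma inv1x1 (M : Matrix (Fin 1) (Fin 1) ℝ) [Invertible M] :
    ⅟M = Matrix.of fun _ _ => (M 0 0)⁻¹ := by
  have h := invOf_mul_self M
  have h0 : ⅟M 0 0 * M 0 0 = 1 := by
    have := congrFun (congrFun h 0) 0
    simpa [Matrix.mul_apply, Fin.sum_univ_one] using this
  funext i j
  fin_cases i; fin_cases j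
  exact eq_inv_of_mul_eq_one_left h0

theorem acem_denominator_formula {L : ℕ} (R : Matrix (Fin L) (Fin L) ℝ)
    (m d : Fin L → ℝ) (hR : R.IsSymm) (hRinv : IsUnit R.det)
    (h1 : 1 - m ⬝ᵥ R⁻¹ *ᵥ m ≠ 0) :
    Sum.elim d 1 ⬝ᵥ
        (fromBlocks R (fun i (_ : Fin 1) => m i) (fun (_ : Fin 1) j => m j) 1)⁻¹ *ᵥ
        Sum.elim d 1 =
      d ⬝ᵥ R⁻¹ *ᵥ d +
        (1 - m ⬝ᵥ R⁻¹ *ᵥ m)⁻¹ * (m ⬝ᵥ R⁻¹ *ᵥ d - 1) ^ 2 := by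
  haveI iR : Invertible R := R.invertibleOfIsUnitDet hRinv
  have hiR : ⅟R = R⁻¹ := invOf_eq_nonsing_inv R
  set B : Matrix (Fin L) (Fin 1) ℝ := fun i _ => m i with hB
  set C : Matrix (Fin 1) (Fin L) ℝ := fun _ j => m j with hC
  set s : ℝ := 1 - m ⬝ᵥ R⁻¹ *ᵥ m with hs
  have hRinvsymm : (R⁻¹)ᵀ = R⁻¹ := by
    rw [Matrix.transpose_nonsing_inv, hR.eq]
  have hsym : ∀ v w : Fin L → ℝ, v ⬝ᵥ R⁻¹ *ᵥ w = w ⬝ᵥ R⁻¹ *ᵥ v := by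
    intro v w
    rw [Matrix.dotProduct_mulVec, ← Matrix.mulVec_transpose, hRinvsymm,
      dotProduct_comm]
  have hS : (1 : Matrix (Fin 1) (Fin 1) ℝ) - C * ⅟R * B = Matrix.of fun _ _ => s := by
    funext i j
    fin_cases i; fin_cases j
    have h2 : (C * ⅟R * B) 0 0 = m ⬝ᵥ R⁻¹ *ᵥ m := by
      simp only [Matrix.mul_apply]
      simp only [Matrix.mul_apply, dotProduct, Matrix.mulVec, hB, hC, hiR,
        Finset.sum_mul, Finset.mul_sum]
      rw [Finset.sum_comm]
      exact Finset.sum_congr rfl fun k _ => Finset.sum_congr rfl fun j _ => by ring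
    simp only [Matrix.sub_apply, Matrix.one_apply_eq, Matrix.of_apply]
    rw [show ((0 : Fin 1) = ⟨0, by omega⟩) from rfl] at h2
    rw [h2, hs]
  haveI iS : Invertible ((1 : Matrix (Fin 1) (Fin 1) ℝ) - C * ⅟R * B) := by
    rw [hS]
    apply Matrix.invertibleOfIsUnitDet
    rw [Matrix.det_fin_one]
    exact isUnit_iff_ne_zero.mpr h1
  haveI iA : Invertible (fromBlocks R B C (1 : Matrix (Fin 1) (Fin 1) ℝ)) :=
    Matrix.fromBlocks₁₁Invertible R B C 1
  have hiS : ⅟((1 : Matrix (Fin 1) (Fin 1) ℝ) - C * ⅟R * B) = Matrix.of fun _ _ => s⁻¹ := by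
    rw [inv1x1, hS]
    rfl
  have hInv : (fromBlocks R B C (1 : Matrix (Fin 1) (Fin 1) ℝ))⁻¹ =
      fromBlocks (⅟R + ⅟R * B * ⅟(1 - C * ⅟R * B) * C * ⅟R) (-(⅟R * B * ⅟(1 - C * ⅟R * B)))
        (-(⅟(1 - C * ⅟R * B) * C * ⅟R)) (⅟(1 - C * ⅟R * B)) := by
    rw [← invOf_eq_nonsing_inv, Matrix.invOf_fromBlocks₁₁_eq]
  rw [hInv, Matrix.fromBlocks_mulVec, sumElim_dotProduct_sumElim]
  simp only [Sum.elim_comp_inl, Sum.elim_comp_inr]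
  set b₂ : ℝ := m ⬝ᵥ R⁻¹ *ᵥ d with hb2
  have hCd : C *ᵥ (⅟R *ᵥ d) = fun _ => b₂ := by
    funext i
    simp [Matrix.mulVec, hC, hiR, hb2, dotProduct]
  have hBv : ∀ y : Fin 1 → ℝ, B *ᵥ y = fun i => m i * y 0 := by
    intro y; funext i
    simp [Matrix.mulVec, hB, dotProduct, Fin.sum_univ_one]
  have hSv : ∀ y : Fin 1 → ℝ, ⅟((1 : Matrix (Fin 1) (Fin 1) ℝ) - C * ⅟R * B) *ᵥ y
      = fun _ => s⁻¹ * y 0 := by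
    intro y; funext i
    fin_cases i
    simp [hiS, Matrix.mulVec, dotProduct, Fin.sum_univ_one]
  have key1 : d ⬝ᵥ ((⅟R + ⅟R * B * ⅟(1 - C * ⅟R * B) * C * ⅟R) *ᵥ d)
      = d ⬝ᵥ R⁻¹ *ᵥ d + s⁻¹ * b₂ * b₂ := by
    rw [Matrix.add_mulVec, dotProduct_add]
    congr 1
    · rw [hiR]
    simp only [← Matrix.mulVec_mulVec]
    rw [hCd, hSv, hBv]
    have he : (fun i => m i * ((fun _ => s⁻¹ * b₂) (0 : Fin 1))) = (s⁻¹ * b₂) • m := by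
      funext i; simp [mul_comm]
    rw [he, Matrix.mulVec_smul, dotProduct_smul, hiR, hsym d m, ← hb2]
    simp only [smul_eq_mul]
    try ring
  have key2 : d ⬝ᵥ (-(⅟R * B * ⅟(1 - C * ⅟R * B)) *ᵥ (1 : Fin 1 → ℝ)) = -(s⁻¹ * b₂) := by
    rw [Matrix.neg_mulVec, dotProduct_neg]
    simp only [← Matrix.mulVec_mulVec]
    rw [hSv, hBv]
    have he : (fun i => m i * ((fun _ => s⁻¹ * (1 : Fin 1 → ℝ) 0) (0 : Fin 1))) = s⁻¹ • m := by
      funext i; simp [mul_comm]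
    rw [he, Matrix.mulVec_smul, dotProduct_smul, hiR, hsym d m, ← hb2]
    simp [mul_comm]
  have key3 : (1 : Fin 1 → ℝ) ⬝ᵥ (-(⅟(1 - C * ⅟R * B) * C * ⅟R) *ᵥ d) = -(s⁻¹ * b₂) := by
    rw [Matrix.neg_mulVec, dotProduct_neg]
    simp only [← Matrix.mulVec_mulVec]
    rw [hCd, hSv]
    simp [dotProduct, Fin.sum_univ_one]
  have key4 : (1 : Fin 1 → ℝ) ⬝ᵥ (⅟((1 : Matrix (Fin 1) (Fin 1) ℝ) - C * ⅟R * B) *ᵥ (1 : Fin 1 → ℝ)) = s⁻¹ := by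
    rw [hSv]
    simp [dotProduct, Fin.sum_univ_one]
  rw [dotProduct_add, dotProduct_add, key1, key2, key3, key4]
  ring
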